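/- Let L be a lattice of signature (1,n) and g an element of O^+(L) that is parabolic as an isometry of H^n (fixes no point of H^n and exactly one point of ∂H^n). Then the unique fixed boundary point of g is rational, i.e., it is represented by a nonzero isotropic vector in L ⊗ Q lying in the closure of the positive cone. -/

import Mathlib

open Matrix Filter Topology
open scoped BigOperators

noncomputable section
set_option linter.unusedSectionVars false
set_option maxHeartbeats 1600000
open Module


/-- The standard Minkowski bilinear form of signature `(1,n)` on `ℝ^{n+1}`. -/
def mink (n : ℕ) (v w : Fin (n+1) → ℝ) : ℝ :=
  v 0 * w 0 - ∑ i : Fin n, v i.succ * w i.succ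

/-- Real coordinates of an integral vector. -/
def zc (n : ℕ) (v : Fin (n+1) → ℤ) : Fin (n+1) → ℝ := fun i => (v i : ℝ)

/-- An integral vector is primitive if it is not an integer multiple `k • w`, `k ≥ 2`. -/
def Primitive (n : ℕ) (e : Fin (n+1) → ℤ) : Prop :=
  ¬ ∃ (w : Fin (n+1) → ℤ) (k : ℤ), 2 ≤ k ∧ e = k • w

/-- The hyperboloid model determined by the form `B` and the positive cone `C`. -/
def hyperboloid (n : ℕ) (B : (Fin (n+1) → ℝ) → (Fin (n+1) → ℝ) → ℝ)
    (C : Set (Fin (n+1) → ℝ)) : Set (Fin (n+1) → ℝ) :=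
  {x | x ∈ C ∧ B x x = 1}


section Aux





variable {l m : Type*} [Fintype l] [Fintype m] [DecidableEq l] [DecidableEq m]

/-- cast of rational vectors to real vectors -/
def rcast (q : l → ℚ) : l → ℝ := fun i => (q i : ℝ)

lemma rcast_eq_comp (q : l → ℚ) : rcast q = (Rat.cast : ℚ → ℝ) ∘ q := rfl

lemma rcast_ne_zero {q : l → ℚ} (h : q ≠ 0) : rcast q ≠ 0 := by
  intro h0
  apply h
  funext i
  have := congrFun h0 i
  simpa [rcast] using this

/-- rcast as a ℚ-linear map -/
def rcastL : (l → ℚ) →ₗ[ℚ] (l → ℝ) where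
  toFun := rcast
  map_add' x y := by funext i; simp [rcast]
  map_smul' c x := by funext i; simp [rcast, Rat.smul_def]

lemma mulVec_rcast (M : Matrix m l ℚ) (q : l → ℚ) :
    (M.map (Rat.cast : ℚ → ℝ)).mulVec (rcast q) = rcast (M.mulVec q) := by
  funext i
  exact (RingHom.map_mulVec (Rat.castHom ℝ) M q i).symm

/-- casts of ℚ-linearly-independent rational vectors are ℝ-linearly independent -/
lemma rcast_linearIndependent {d : ℕ} {v : Fin d → (l → ℚ)}
    (hv : LinearIndependent ℚ v) : LinearIndependent ℝ (fun j => rcast (v j)) := by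
  classical
  set V : Matrix l (Fin d) ℚ := Matrix.of (fun i j => v j i) with hV
  have hinj : LinearMap.ker V.mulVecLin = ⊥ := by
    rw [LinearMap.ker_eq_bot']
    intro g hg
    have := Fintype.linearIndependent_iff.mp hv g ?_
    · funext j; exact this j
    · funext i
      have := congrFun hg i
      simpa [Matrix.mulVecLin_apply, Matrix.mulVec, dotProduct, hV,
        Finset.sum_apply, Pi.smul_apply, smul_eq_mul, mul_comm] using this
  obtain ⟨gℓ, hgℓ⟩ := LinearMap.exists_leftInverse_of_injective V.mulVecLin hinj
  set L : Matrix (Fin d) l ℚ := LinearMap.toMatrix' gℓ with hL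
  have hLV : L * V = 1 := by
    have : LinearMap.toMatrix' (gℓ ∘ₗ V.mulVecLin) = LinearMap.toMatrix' (LinearMap.id (R := ℚ) (M := Fin d → ℚ)) := by
      rw [hgℓ]
    rw [LinearMap.toMatrix'_comp] at this
    rw [← Matrix.toLin'_apply'] at this
    rw [LinearMap.toMatrix'_toLin'] at this
    simpa [LinearMap.toMatrix'_id] using this
  rw [Fintype.linearIndependent_iff]
  intro c hc
  have hVc : (V.map (Rat.cast : ℚ → ℝ)).mulVec c = 0 := by
    funext i
    have := congrFun hc i
    simpa [Matrix.mulVec, dotProduct, hV, Finset.sum_apply, Pi.smul_apply,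
      smul_eq_mul, rcast, mul_comm] using this
  have hone : ((1 : Matrix (Fin d) (Fin d) ℚ).map (Rat.cast : ℚ → ℝ)) = 1 := by
    funext i j; simp [Matrix.map_apply, Matrix.one_apply, apply_ite]
  have key : ((L * V).map (Rat.cast : ℚ → ℝ)).mulVec c = 0 := by
    have : (Rat.cast : ℚ → ℝ) = ⇑(Rat.castHom ℝ) := rfl
    rw [this, Matrix.map_mul, ← Matrix.mulVec_mulVec, ← this, hVc, Matrix.mulVec_zero]
  have : c = 0 := by
    rw [hLV, hone, Matrix.one_mulVec] at key
    exact key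
  intro i; exact congrFun this i

lemma finrank_range_cast_le (M : Matrix m l ℚ) :
    finrank ℚ (LinearMap.range M.mulVecLin) ≤
      finrank ℝ (LinearMap.range (M.map (Rat.cast : ℚ → ℝ)).mulVecLin) := by
  classical
  set Rq := LinearMap.range M.mulVecLin
  set Rr := LinearMap.range (M.map (Rat.cast : ℚ → ℝ)).mulVecLin
  set b := Module.finBasis ℚ Rq
  set w : Fin (finrank ℚ Rq) → (m → ℚ) := fun j => (b j : m → ℚ) with hw
  have hwind : LinearIndependent ℚ w := b.linearIndependent.map' Rq.subtype (Submodule.ker_subtype _)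
  have hwr : ∀ j, rcast (w j) ∈ Rr := by
    intro j
    obtain ⟨p, hp⟩ := (b j).2
    refine ⟨rcast p, ?_⟩
    rw [Matrix.mulVecLin_apply, mulVec_rcast]
    rw [Matrix.mulVecLin_apply] at hp
    rw [hp]
  have hind : LinearIndependent ℝ (fun j => (⟨rcast (w j), hwr j⟩ : Rr)) := by
    apply LinearIndependent.of_comp Rr.subtype
    exact rcast_linearIndependent hwind
  simpa using hind.fintype_card_le_finrank

lemma finrank_ker_cast_le (M : Matrix m l ℚ) :
    finrank ℝ (LinearMap.ker (M.map (Rat.cast : ℚ → ℝ)).mulVecLin) ≤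
      finrank ℚ (LinearMap.ker M.mulVecLin) := by
  have h1 := LinearMap.finrank_range_add_finrank_ker M.mulVecLin
  have h2 := LinearMap.finrank_range_add_finrank_ker (M.map (Rat.cast : ℚ → ℝ)).mulVecLin
  rw [Module.finrank_fintype_fun_eq_card] at h1 h2
  have := finrank_range_cast_le M
  omega

/-- the real kernel of a rational matrix is spanned by rational kernel vectors -/
lemma ker_rational (M : Matrix m l ℚ) :
    ∃ (d : ℕ) (p : Fin d → (l → ℚ)), (∀ j, M.mulVec (p j) = 0) ∧
      ∀ x : l → ℝ, (M.map (Rat.cast : ℚ → ℝ)).mulVec x = 0 →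
        x ∈ Submodule.span ℝ (Set.range (fun j => rcast (p j))) := by
  classical
  set Kq := LinearMap.ker M.mulVecLin
  set b := Module.finBasis ℚ Kq
  set d := finrank ℚ Kq
  set p : Fin d → (l → ℚ) := fun j => (b j : l → ℚ) with hp
  have hker : ∀ j, M.mulVec (p j) = 0 := fun j => (b j).2
  refine ⟨d, p, hker, ?_⟩
  have hpind : LinearIndependent ℚ p := b.linearIndependent.map' Kq.subtype (Submodule.ker_subtype _)
  have hrind : LinearIndependent ℝ (fun j => rcast (p j)) := rcast_linearIndependent hpind
  set Sp := Submodule.span ℝ (Set.range (fun j => rcast (p j)))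
  set Kr := LinearMap.ker (M.map (Rat.cast : ℚ → ℝ)).mulVecLin
  have hle : Sp ≤ Kr := by
    rw [Submodule.span_le]
    rintro _ ⟨j, rfl⟩
    have hz : (M.map (Rat.cast : ℚ → ℝ)).mulVec (rcast (p j)) = 0 := by
      rw [mulVec_rcast, hker j]; funext i; simp [rcast]
    show rcast (p j) ∈ Kr
    rw [LinearMap.mem_ker, Matrix.mulVecLin_apply, hz]
  have hfr : finrank ℝ Kr ≤ finrank ℝ Sp := by
    rw [finrank_span_eq_card hrind]
    simpa using finrank_ker_cast_le M
  have : Sp = Kr := Submodule.eq_of_le_of_finrank_le hle hfr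
  intro x hx
  rw [this]
  exact hx









/-- spatial part of a vector, as a Euclidean vector -/
def spx (n : ℕ) (x : Fin (n+1) → ℝ) : EuclideanSpace ℝ (Fin n) :=
  (WithLp.equiv 2 (Fin n → ℝ)).symm (fun i => x i.succ)

lemma spx_apply (n : ℕ) (x : Fin (n+1) → ℝ) (i : Fin n) : spx n x i = x i.succ := rfl

/-- spx as a linear map -/
def spxL (n : ℕ) : (Fin (n+1) → ℝ) →ₗ[ℝ] EuclideanSpace ℝ (Fin n) where
  toFun := spx n
  map_add' x y := by
    ext i
    rw [PiLp.add_apply]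
    simp [spx_apply]
  map_smul' c x := by
    ext i
    rw [PiLp.smul_apply]
    simp [spx_apply]

lemma spx_add (n : ℕ) (x y : Fin (n+1) → ℝ) : spx n (x + y) = spx n x + spx n y :=
  (spxL n).map_add x y

lemma spx_smul (n : ℕ) (c : ℝ) (x : Fin (n+1) → ℝ) : spx n (c • x) = c • spx n x :=
  (spxL n).map_smul c x

lemma spx_neg (n : ℕ) (x : Fin (n+1) → ℝ) : spx n (-x) = -spx n x :=
  map_neg (spxL n) x

lemma norm_spx_sq (n : ℕ) (x : Fin (n+1) → ℝ) :
    ‖spx n x‖ ^ 2 = ∑ i : Fin n, x i.succ ^ 2 := by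
  rw [EuclideanSpace.norm_eq, Real.sq_sqrt (by positivity)]
  simp [spx_apply, Real.norm_eq_abs, sq_abs]

lemma mink_self_eq (n : ℕ) (x : Fin (n+1) → ℝ) :
    mink n x x = x 0 ^ 2 - ‖spx n x‖ ^ 2 := by
  rw [mink, norm_spx_sq]
  have h : ∑ i : Fin n, x i.succ * x i.succ = ∑ i : Fin n, x i.succ ^ 2 :=
    Finset.sum_congr rfl fun i _ => (sq _).symm
  rw [h, sq]

lemma inner_spx (n : ℕ) (x y : Fin (n+1) → ℝ) :
    (inner ℝ (spx n x) (spx n y) : ℝ) = ∑ i : Fin n, x i.succ * y i.succ := by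
  rw [PiLp.inner_apply]
  simp [spx_apply, RCLike.inner_apply, mul_comm]

lemma mink_eq_inner (n : ℕ) (x y : Fin (n+1) → ℝ) :
    mink n x y = x 0 * y 0 - (inner ℝ (spx n x) (spx n y) : ℝ) := by
  rw [mink, inner_spx]

/-- zero first coordinate and isotropic implies zero -/
lemma mink_zero_of (n : ℕ) (x : Fin (n+1) → ℝ) (hx : mink n x x = 0) (h0 : x 0 = 0) : x = 0 := by
  have h1 : ‖spx n x‖ ^ 2 = 0 := by
    have := mink_self_eq n x
    rw [hx, h0] at this
    nlinarith [this]
  have h2 : spx n x = 0 := by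
    rwa [pow_eq_zero_iff (two_ne_zero), norm_eq_zero] at h1
  funext i
  refine Fin.cases ?_ ?_ i
  · exact h0
  · intro j
    have := congrArg (fun v => v j) h2
    simpa [spx_apply] using this

/-- two orthogonal isotropic vectors in Minkowski space are parallel -/
lemma mink_parallel {n : ℕ} {x y : Fin (n+1) → ℝ} (hx : mink n x x = 0) (hy : mink n y y = 0)
    (hxy : mink n x y = 0) (hx0 : x ≠ 0) : ∃ r : ℝ, y = r • x := by
  set a := spx n x with ha
  set b := spx n y with hb
  have hx0' : x 0 ≠ 0 := fun h => hx0 (mink_zero_of n x hx h)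
  have hna : ‖a‖ = |x 0| := by
    have h1 : ‖a‖ ^ 2 = x 0 ^ 2 := by
      have := mink_self_eq n x; rw [hx] at this; linarith
    rw [← Real.sqrt_sq (norm_nonneg a), h1, Real.sqrt_sq_eq_abs]
  have hnb : ‖b‖ = |y 0| := by
    have h1 : ‖b‖ ^ 2 = y 0 ^ 2 := by
      have := mink_self_eq n y; rw [hy] at this; linarith
    rw [← Real.sqrt_sq (norm_nonneg b), h1, Real.sqrt_sq_eq_abs]
  have hab : (inner ℝ a b : ℝ) = x 0 * y 0 := by
    have := mink_eq_inner n x y; rw [hxy] at this; linarith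
  by_cases hy0 : y 0 = 0
  · refine ⟨0, ?_⟩
    have hb0 : b = 0 := by
      rw [← norm_eq_zero, hnb, hy0, abs_zero]
    funext i
    refine Fin.cases ?_ ?_ i
    · simp [hy0]
    · intro j
      have := congrArg (fun v => v j) hb0
      simpa [hb, spx_apply] using this
  · have ha0 : a ≠ (0 : EuclideanSpace ℝ (Fin n)) := by
      intro h
      apply hx0'
      have h2 : ‖a‖ = 0 := by rw [h, norm_zero]
      rw [hna] at h2
      exact abs_eq_zero.mp h2
    have habs : |(inner ℝ a b : ℝ) / (‖a‖ * ‖b‖)| = 1 := by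
      rw [hab, hna, hnb, ← abs_mul, abs_div, abs_abs]
      exact div_self (abs_ne_zero.mpr (mul_ne_zero hx0' hy0))
    obtain ⟨-, r, hr0, hbr⟩ := (abs_real_inner_div_norm_mul_norm_eq_one_iff a b).mp habs
    have hr : x 0 * y 0 = r * (x 0 * x 0) := by
      have h2 : (inner ℝ a b : ℝ) = r * (inner ℝ a a : ℝ) := by rw [hbr, real_inner_smul_right]
      rw [hab, real_inner_self_eq_norm_sq, hna, sq_abs] at h2
      rw [h2]; ring
    have hyx : y 0 = r * x 0 := by
      have := mul_right_cancel₀ hx0' (by linarith [hr] : y 0 * x 0 = (r * x 0) * x 0)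
      exact this
    refine ⟨r, ?_⟩
    funext i
    refine Fin.cases ?_ ?_ i
    · simpa using hyx
    · intro j
      have := congrArg (fun v => v j) hbr
      rw [PiLp.smul_apply] at this
      simpa [ha, hb, spx_apply] using this

lemma geom_facts {n : ℕ} {B : (Fin (n+1) → ℝ) → (Fin (n+1) → ℝ) → ℝ}
    (T : (Fin (n+1) → ℝ) ≃ₗ[ℝ] (Fin (n+1) → ℝ))
    (hT : ∀ v w, B v w = mink n (T v) (T w))
    {C : Set (Fin (n+1) → ℝ)} {v₀ : Fin (n+1) → ℝ} (hv₀ : 0 < B v₀ v₀)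
    (hCdef : C = connectedComponentIn {v | 0 < B v v} v₀) :
    (∀ x, 0 < B x x → x ∈ C ∨ -x ∈ C) ∧
    (∀ x, B x x = 0 → x ≠ 0 → x ∈ closure C ∨ -x ∈ closure C) ∧
    (∀ s : ℝ, 0 < s → ∀ x ∈ closure C, s • x ∈ closure C) := by
  classical
  set U : Set (Fin (n+1) → ℝ) := {x | ‖spx n (T x)‖ < T x 0} with hUdef
  have hBeq : ∀ x, B x x = T x 0 ^ 2 - ‖spx n (T x)‖ ^ 2 := by
    intro x; rw [hT, mink_self_eq]
  -- membership in U implies positivity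
  have hUpos : ∀ x ∈ U, 0 < B x x := by
    intro x hx
    have h1 : ‖spx n (T x)‖ < T x 0 := hx
    have h2 := norm_nonneg (spx n (T x))
    rw [hBeq]; nlinarith
  -- characterize -x ∈ U
  have hmemneg : ∀ x, (-x ∈ U ↔ ‖spx n (T x)‖ < -(T x 0)) := by
    intro x
    have h1 : T (-x) = -(T x) := map_neg T x
    constructor
    · intro h
      have h2 : ‖spx n (T (-x))‖ < T (-x) 0 := h
      rw [h1, spx_neg, norm_neg] at h2
      simpa using h2
    · intro h
      show ‖spx n (T (-x))‖ < T (-x) 0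
      rw [h1, spx_neg, norm_neg]
      simpa using h
  -- positivity implies membership in U or -U
  have hUnion : ∀ x, 0 < B x x → x ∈ U ∨ -x ∈ U := by
    intro x hx
    rw [hBeq] at hx
    have h2 := norm_nonneg (spx n (T x))
    rcases le_or_gt (T x 0) 0 with h | h
    · right; rw [hmemneg]; nlinarith
    · left; show ‖spx n (T x)‖ < T x 0; nlinarith
  -- disjointness
  have hdisjUU : ∀ x, x ∈ U → -x ∈ U → False := by
    intro x h1 h2
    rw [hmemneg] at h2
    have h3 : ‖spx n (T x)‖ < T x 0 := h1
    have h4 := norm_nonneg (spx n (T x))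
    linarith
  -- openness
  have hTc : Continuous T := T.toLinearMap.continuous_of_finiteDimensional
  have hspc : Continuous (spx n) := (spxL n).continuous_of_finiteDimensional
  have hUopen : IsOpen U :=
    isOpen_lt (continuous_norm.comp (hspc.comp hTc)) ((continuous_apply 0).comp hTc)
  -- convexity
  have hUconv : Convex ℝ U := by
    intro x hx y hy a b ha hb hab
    show ‖spx n (T (a • x + b • y))‖ < T (a • x + b • y) 0
    have hx' : ‖spx n (T x)‖ < T x 0 := hx
    have hy' : ‖spx n (T y)‖ < T y 0 := hy
    have hTe : T (a • x + b • y) = a • T x + b • T y := by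
      rw [map_add, _root_.map_smul, _root_.map_smul]
    rw [hTe]
    have hsp : spx n (a • T x + b • T y) = a • spx n (T x) + b • spx n (T y) := by
      rw [spx_add, spx_smul, spx_smul]
    rw [hsp]
    have heval : (a • T x + b • T y) 0 = a * T x 0 + b * T y 0 := rfl
    rw [heval]
    calc ‖a • spx n (T x) + b • spx n (T y)‖
        ≤ ‖a • spx n (T x)‖ + ‖b • spx n (T y)‖ := norm_add_le _ _
      _ = a * ‖spx n (T x)‖ + b * ‖spx n (T y)‖ := by
          rw [norm_smul, norm_smul, Real.norm_eq_abs, Real.norm_eq_abs,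
            abs_of_nonneg ha, abs_of_nonneg hb]
      _ < a * T x 0 + b * T y 0 := by
          rcases eq_or_lt_of_le ha with h | h
          · rcases eq_or_lt_of_le hb with h' | h'
            · exfalso; rw [← h, ← h'] at hab; norm_num at hab
            · rw [← h]; simpa using (mul_lt_mul_of_pos_left hy' h')
          · rcases eq_or_lt_of_le hb with h' | h'
            · rw [← h']; simpa using (mul_lt_mul_of_pos_left hx' h)
            · exact add_lt_add (mul_lt_mul_of_pos_left hx' h) (mul_lt_mul_of_pos_left hy' h')
  -- cone property
  have hUcone : ∀ s : ℝ, 0 < s → ∀ x ∈ U, s • x ∈ U := by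
    intro s hs x hx
    have hx' : ‖spx n (T x)‖ < T x 0 := hx
    show ‖spx n (T (s • x))‖ < T (s • x) 0
    rw [_root_.map_smul, spx_smul, norm_smul, Real.norm_eq_abs, abs_of_pos hs]
    have heval : (s • T x) 0 = s * T x 0 := rfl
    rw [heval]
    exact mul_lt_mul_of_pos_left hx' hs
  -- isotropic vectors lie in the closure of U or -U
  have hUiso : ∀ x, B x x = 0 → x ≠ 0 → x ∈ closure U ∨ -x ∈ closure U := by
    intro x hx hx0
    set w₀ : Fin (n+1) → ℝ := T.symm (Pi.single 0 1) with hw₀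
    have hTw₀ : T w₀ = Pi.single 0 1 := T.apply_symm_apply _
    have hspw₀ : spx n (Pi.single 0 1) = 0 := by
      ext i
      rw [spx_apply]
      have : (i.succ : Fin (n+1)) ≠ 0 := Fin.succ_ne_zero i
      simp [Pi.single_eq_of_ne this]
    have key : ∀ z : Fin (n+1) → ℝ, ‖spx n (T z)‖ ≤ T z 0 → z ∈ closure U := by
      intro z hz
      have hcont : Continuous (fun ε : ℝ => z + ε • w₀) := by
        exact continuous_const.add (continuous_id.smul continuous_const)
      have h0 : z + (0:ℝ) • w₀ = z := by simp
      have htend : Tendsto (fun ε : ℝ => z + ε • w₀) (𝓝[>] (0:ℝ)) (𝓝 z) := by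
        have := hcont.tendsto 0
        rw [h0] at this
        exact this.mono_left nhdsWithin_le_nhds
      refine mem_closure_of_tendsto htend ?_
      refine eventually_nhdsWithin_of_forall ?_
      intro ε hε
      have hε' : (0:ℝ) < ε := hε
      show ‖spx n (T (z + ε • w₀))‖ < T (z + ε • w₀) 0
      have hTe : T (z + ε • w₀) = T z + ε • (Pi.single 0 1 : Fin (n+1) → ℝ) := by
        rw [map_add, _root_.map_smul, hTw₀]
      rw [hTe, spx_add, spx_smul, hspw₀, smul_zero, add_zero]
      have heval : (T z + ε • (Pi.single 0 1 : Fin (n+1) → ℝ)) 0 = T z 0 + ε := by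
        simp
      rw [heval]
      linarith
    have hxTiso : T x 0 ^ 2 = ‖spx n (T x)‖ ^ 2 := by
      have := hBeq x; rw [hx] at this; linarith
    rcases le_or_gt 0 (T x 0) with h | h
    · left
      apply key
      have : ‖spx n (T x)‖ = T x 0 := by
        rw [← Real.sqrt_sq (norm_nonneg _), ← hxTiso, Real.sqrt_sq h]
      linarith
    · right
      apply key
      have hTn : T (-x) = -(T x) := map_neg T x
      have h1 : ‖spx n (T (-x))‖ = -(T x 0) := by
        rw [hTn, spx_neg, norm_neg]
        rw [← Real.sqrt_sq (norm_nonneg _), ← hxTiso, Real.sqrt_sq_eq_abs, abs_of_neg h]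
      rw [h1, hTn]
      simp
  -- identification of connected components
  have hSU : {v : Fin (n+1) → ℝ | 0 < B v v} ⊆ U ∪ (-U) := by
    intro x hx
    rcases hUnion x hx with h | h
    · exact Or.inl h
    · exact Or.inr (Set.mem_neg.mpr h)
  have comp_eq : ∀ W : Set (Fin (n+1) → ℝ), IsOpen W → IsOpen (-W) → Convex ℝ W →
      (∀ x ∈ W, 0 < B x x) → ({v : Fin (n+1) → ℝ | 0 < B v v} ⊆ W ∪ (-W)) →
      Disjoint W (-W) → v₀ ∈ W → C = W := by
    intro W hWo hWno hWc hWpos hWun hWd hv₀W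
    rw [hCdef]
    apply Set.Subset.antisymm
    · apply IsPreconnected.subset_left_of_subset_union hWo hWno hWd
      · exact (connectedComponentIn_subset _ _).trans hWun
      · exact ⟨v₀, mem_connectedComponentIn hv₀, hv₀W⟩
      · exact isPreconnected_connectedComponentIn
    · exact hWc.isPreconnected.subset_connectedComponentIn hv₀W (fun x hx => hWpos x hx)
  have hdisj : Disjoint U (-U) := by
    rw [Set.disjoint_left]
    intro x h1 h2
    exact hdisjUU x h1 (Set.mem_neg.mp h2)
  -- the two cases
  rcases hUnion v₀ hv₀ with hv₀U | hv₀U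
  · have hCU : C = U := comp_eq U hUopen hUopen.neg hUconv hUpos hSU hdisj hv₀U
    refine ⟨?_, ?_, ?_⟩
    · intro x hx; rw [hCU]; exact hUnion x hx
    · intro x hx hx0; rw [hCU]; exact hUiso x hx hx0
    · intro s hs x hx
      rw [hCU] at hx ⊢
      have h1 : (s • ·) '' U ⊆ U := by
        rintro _ ⟨z, hz, rfl⟩
        exact hUcone s hs z hz
      have h2 := image_closure_subset_closure_image (continuous_const_smul s) (s := U)
      exact closure_mono h1 (h2 (Set.mem_image_of_mem _ hx))
  · -- v₀ ∈ -U
    have h1 : -U = Set.image (fun z => -z) U := by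
      ext z
      constructor
      · intro h; exact ⟨-z, Set.mem_neg.mp h, by simp⟩
      · rintro ⟨w, hw, rfl⟩
        rw [Set.mem_neg, neg_neg]
        exact hw
    have hnopen : IsOpen (-U) := hUopen.neg
    have hnconv : Convex ℝ (-U) := hUconv.neg
    have hnpos : ∀ x ∈ (-U), 0 < B x x := by
      intro x hx
      have h2 := hUpos (-x) (Set.mem_neg.mp hx)
      rw [hBeq] at h2 ⊢
      rw [map_neg] at h2
      rw [spx_neg, norm_neg] at h2
      simpa using h2
    have hSUn : {v : Fin (n+1) → ℝ | 0 < B v v} ⊆ (-U) ∪ (-(-U)) := by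
      rw [neg_neg]
      intro x hx
      exact (hSU hx).symm
    have hdisjn : Disjoint (-U) (-(-U)) := by rw [neg_neg]; exact hdisj.symm
    have hv₀n : v₀ ∈ -U := Set.mem_neg.mpr hv₀U
    have hCU : C = -U := comp_eq (-U) hnopen (by rw [neg_neg]; exact hUopen) hnconv hnpos hSUn hdisjn hv₀n
    have hclneg : ∀ y, y ∈ closure U → -y ∈ closure (-U) := by
      intro y hy
      have h2 := image_closure_subset_closure_image (continuous_neg (G := Fin (n+1) → ℝ)) (s := U)
      have h3 : -y ∈ (fun z => -z) '' closure U := ⟨y, hy, rfl⟩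
      have h4 := h2 h3
      rwa [← h1] at h4
    refine ⟨?_, ?_, ?_⟩
    · intro x hx
      rw [hCU]
      rcases hUnion x hx with h | h
      · right; rw [Set.mem_neg, neg_neg]; exact h
      · left; exact Set.mem_neg.mpr h
    · intro x hx hx0
      rw [hCU]
      rcases hUiso x hx hx0 with h | h
      · right; exact hclneg x h
      · left
        have := hclneg (-x) h
        rwa [neg_neg] at this
    · intro s hs x hx
      rw [hCU] at hx ⊢
      have hncone : ∀ z ∈ (-U), s • z ∈ (-U) := by
        intro z hz
        rw [Set.mem_neg, ← smul_neg]
        exact hUcone s hs (-z) (Set.mem_neg.mp hz)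
      have h1' : (s • ·) '' (-U) ⊆ (-U) := by
        rintro _ ⟨z, hz, rfl⟩
        exact hncone z hz
      have h2 := image_closure_subset_closure_image (continuous_const_smul s) (s := (-U))
      exact closure_mono h1' (h2 (Set.mem_image_of_mem _ hx))


lemma mink_add_left (n : ℕ) (v v' w : Fin (n+1) → ℝ) :
    mink n (v + v') w = mink n v w + mink n v' w := by
  have h : ∑ i : Fin n, (v + v') i.succ * w i.succ
      = ∑ i : Fin n, v i.succ * w i.succ + ∑ i : Fin n, v' i.succ * w i.succ := by
    rw [← Finset.sum_add_distrib]
    exact Finset.sum_congr rfl fun i _ => by rw [Pi.add_apply, add_mul]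
  rw [mink, mink, mink, h, Pi.add_apply]
  ring

lemma mink_smul_left (n : ℕ) (c : ℝ) (v w : Fin (n+1) → ℝ) :
    mink n (c • v) w = c * mink n v w := by
  have h : ∑ i : Fin n, (c • v) i.succ * w i.succ = c * ∑ i : Fin n, v i.succ * w i.succ := by
    rw [Finset.mul_sum]
    exact Finset.sum_congr rfl fun i _ => by rw [Pi.smul_apply, smul_eq_mul, mul_assoc]
  rw [mink, mink, h, Pi.smul_apply, smul_eq_mul]
  ring

lemma mink_symm' (n : ℕ) (v w : Fin (n+1) → ℝ) : mink n v w = mink n w v := by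
  rw [mink, mink, mul_comm]
  congr 1
  exact Finset.sum_congr rfl fun i _ => mul_comm _ _

end Aux

/-- a parabolic element `g` of `O⁺(L)` (no fixed point on `Hⁿ`, a unique
fixed boundary ray) has a rational fixed boundary point: every fixed boundary ray is
spanned by a vector with rational coordinates. -/
theorem stmt11 (n : ℕ)
    (B : (Fin (n+1) → ℝ) → (Fin (n+1) → ℝ) → ℝ)
    (hsig : ∃ T : (Fin (n+1) → ℝ) ≃ₗ[ℝ] (Fin (n+1) → ℝ),
      ∀ v w, B v w = mink n (T v) (T w))
    (hInt : ∀ v w : Fin (n+1) → ℤ, ∃ m : ℤ, B (zc n v) (zc n w) = (m : ℝ))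
    (C : Set (Fin (n+1) → ℝ))
    (hC : ∃ v₀, 0 < B v₀ v₀ ∧ C = connectedComponentIn {v | 0 < B v v} v₀)
    (g : Matrix (Fin (n+1)) (Fin (n+1)) ℤ) (hdet : IsUnit g.det)
    (hgB : ∀ v w, B ((g.map (Int.cast : ℤ → ℝ)).mulVec v)
        ((g.map (Int.cast : ℤ → ℝ)).mulVec w) = B v w)
    (hgC : ∀ v ∈ C, (g.map (Int.cast : ℤ → ℝ)).mulVec v ∈ C)
    (hnofix : ∀ x ∈ hyperboloid n B C, (g.map (Int.cast : ℤ → ℝ)).mulVec x ≠ x)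
    (huniq : ∃! u, u ∈ closure C ∧ ‖u‖ = 1 ∧ B u u = 0 ∧
      ∃ t : ℝ, 0 < t ∧ (g.map (Int.cast : ℤ → ℝ)).mulVec u = t • u) :
    ∀ u, (u ∈ closure C ∧ ‖u‖ = 1 ∧ B u u = 0 ∧
        ∃ t : ℝ, 0 < t ∧ (g.map (Int.cast : ℤ → ℝ)).mulVec u = t • u) →
      ∃ (q : Fin (n+1) → ℚ) (s : ℝ), 0 < s ∧ u = s • (fun i => (q i : ℝ)) := by
  classical
  rintro u ⟨huC, hunorm, huiso, t, htpos, hgu⟩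
  obtain ⟨T, hT⟩ := hsig
  obtain ⟨v₀, hv₀, hCdef⟩ := hC
  obtain ⟨hpos, hiso, hcone⟩ := geom_facts T hT hv₀ hCdef
  set A : Matrix (Fin (n+1)) (Fin (n+1)) ℝ := g.map (Int.cast : ℤ → ℝ) with hA
  set Aq : Matrix (Fin (n+1)) (Fin (n+1)) ℚ := g.map (Int.cast : ℤ → ℚ) with hAq
  have hu0 : u ≠ 0 := by
    intro h
    rw [h, norm_zero] at hunorm
    norm_num at hunorm
  -- bilinearity of B
  have hBal : ∀ v v' w, B (v + v') w = B v w + B v' w := by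
    intro v v' w; rw [hT, hT, hT, map_add, mink_add_left]
  have hBsl : ∀ (c : ℝ) v w, B (c • v) w = c * B v w := by
    intro c v w; rw [hT, hT, _root_.map_smul, mink_smul_left]
  have hBsymm : ∀ v w, B v w = B w v := by
    intro v w; rw [hT, hT, mink_symm']
  have hBar : ∀ v w w', B v (w + w') = B v w + B v w' := by
    intro v w w'; rw [hBsymm, hBal, hBsymm w v, hBsymm w' v]
  have hBsr : ∀ (c : ℝ) v w, B v (c • w) = c * B v w := by
    intro c v w; rw [hBsymm, hBsl, hBsymm w v]
  have hBnegl : ∀ v w, B (-v) w = -(B v w) := by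
    intro v w; rw [← neg_one_smul ℝ v, hBsl]; ring
  have hBnegr : ∀ v w, B v (-w) = -(B v w) := by
    intro v w; rw [hBsymm, hBnegl, hBsymm w v]
  -- B as a bilinear map
  set Bbil : (Fin (n+1) → ℝ) →ₗ[ℝ] (Fin (n+1) → ℝ) →ₗ[ℝ] ℝ :=
    LinearMap.mk₂ ℝ B hBal hBsl hBar hBsr with hBbil
  have hBbil_apply : ∀ v w, Bbil v w = B v w := fun v w => rfl
  -- nondegeneracy
  have hBnondeg : ∀ x, (∀ y, B x y = 0) → x = 0 := by
    intro x hx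
    have hTx : ∀ z, mink n (T x) z = 0 := by
      intro z
      have := hx (T.symm z)
      rwa [hT, T.apply_symm_apply] at this
    set y := T x with hy
    have h0 : mink n y (fun i => if i = 0 then y 0 else -(y i)) = 0 := hTx _
    have h1 : y 0 * y 0 + ∑ i : Fin n, y i.succ * y i.succ = 0 := by
      rw [mink] at h0
      have h2 : ∑ i : Fin n, y i.succ * (if i.succ = 0 then y 0 else -(y i.succ))
          = -∑ i : Fin n, y i.succ * y i.succ := by
        rw [← Finset.sum_neg_distrib]
        refine Finset.sum_congr rfl fun i _ => ?_
        rw [if_neg (Fin.succ_ne_zero i)]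
        ring
      rw [if_pos rfl] at h0
      simp only [h2] at h0
      linarith
    have hterm : ∀ i : Fin n, y i.succ * y i.succ = 0 := by
      intro i
      have hnn : ∀ j ∈ Finset.univ, (0:ℝ) ≤ y (Fin.succ j) * y (Fin.succ j) :=
        fun j _ => mul_self_nonneg _
      have hsum : ∑ i : Fin n, y i.succ * y i.succ = 0 := by nlinarith [mul_self_nonneg (y 0), Finset.sum_nonneg hnn]
      exact (Finset.sum_eq_zero_iff_of_nonneg hnn).mp hsum i (Finset.mem_univ i)
    have hy0 : y 0 = 0 := by
      have hnn : ∀ j ∈ Finset.univ, (0:ℝ) ≤ y (Fin.succ j) * y (Fin.succ j) :=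
        fun j _ => mul_self_nonneg _
      nlinarith [Finset.sum_nonneg hnn, mul_self_nonneg (y 0)]
    have hyz : y = 0 := by
      funext i
      refine Fin.cases ?_ ?_ i
      · show y 0 = (0 : Fin (n+1) → ℝ) 0
        rw [Pi.zero_apply]; exact hy0
      · intro j
        show y j.succ = (0 : Fin (n+1) → ℝ) j.succ
        rw [Pi.zero_apply]
        nlinarith [hterm j]
    rw [hy] at hyz
    exact (LinearEquiv.map_eq_zero_iff T).mp hyz
  -- expansion of B via single vectors
  have hBexp2 : ∀ x y, B x y
      = ∑ k, (∑ i, x i * B (Pi.single i 1) (Pi.single k 1)) * y k := by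
    intro x y
    have hsing : ∀ (i : Fin (n+1)), (fun j => if i = j then (1:ℝ) else 0) = (Pi.single i 1 : Fin (n+1) → ℝ) := by
      intro i; funext j; rw [Pi.single_apply]; simp [eq_comm]
    have h1 := LinearMap.pi_apply_eq_sum_univ (Bbil x) y
    simp only [hsing, hBbil_apply, smul_eq_mul] at h1
    rw [h1]
    refine Finset.sum_congr rfl fun k _ => ?_
    have h2 := LinearMap.pi_apply_eq_sum_univ (Bbil.flip (Pi.single k 1)) x
    simp only [hsing, LinearMap.flip_apply, hBbil_apply, smul_eq_mul] at h2
    rw [h2, mul_comm]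
  -- left expansion against single vectors
  have hBexpL : ∀ (x : Fin (n+1) → ℝ) (k : Fin (n+1)),
      B x (Pi.single k 1) = ∑ i, x i * B (Pi.single i 1) (Pi.single k 1) := by
    intro x k
    have hsing : ∀ (i : Fin (n+1)), (fun j => if i = j then (1:ℝ) else 0) = (Pi.single i 1 : Fin (n+1) → ℝ) := by
      intro i; funext j; rw [Pi.single_apply]; simp [eq_comm]
    have h2 := LinearMap.pi_apply_eq_sum_univ (Bbil.flip (Pi.single k 1)) x
    simp only [hsing, LinearMap.flip_apply, hBbil_apply, smul_eq_mul] at h2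
    exact h2
  -- rational Gram matrix
  have hzc : ∀ i : Fin (n+1), zc n (Pi.single i 1) = Pi.single i 1 := by
    intro i
    funext j
    rw [zc, Pi.single_apply, Pi.single_apply, apply_ite (fun z : ℤ => (z : ℝ))]
    norm_num
  set Gq : Matrix (Fin (n+1)) (Fin (n+1)) ℚ :=
    fun i j => ((hInt (Pi.single i 1) (Pi.single j 1)).choose : ℚ) with hGqdef
  have hGq : ∀ i j, ((Gq i j : ℝ)) = B (Pi.single i 1) (Pi.single j 1) := by
    intro i j
    have h := (hInt (Pi.single i 1) (Pi.single j 1)).choose_spec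
    have h1 : ((Gq i j : ℝ)) = (((hInt (Pi.single i 1) (Pi.single j 1)).choose : ℤ) : ℝ) := by
      rw [hGqdef]; push_cast; rfl
    rw [h1, ← h, hzc, hzc]
  -- B with a rational first argument
  have hBw : ∀ (pp : Fin (n+1) → ℚ) (x : Fin (n+1) → ℝ),
      B (rcast pp) x = ∑ k, ((Matrix.vecMul pp Gq k : ℚ) : ℝ) * x k := by
    intro pp x
    rw [hBexp2]
    refine Finset.sum_congr rfl fun k _ => ?_
    congr 1
    have : ((Matrix.vecMul pp Gq k : ℚ) : ℝ) = ∑ i, (pp i : ℝ) * ((Gq i k : ℚ) : ℝ) := by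
      rw [Matrix.vecMul, dotProduct]
      push_cast
      rfl
    rw [this]
    exact Finset.sum_congr rfl fun i _ => by rw [hGq, rcast]
  -- cast identity for Aq - 1
  have hAq1cast : (Aq - 1).map (Rat.cast : ℚ → ℝ) = A - 1 := by
    funext i j
    by_cases hij : i = j <;>
      simp [Matrix.map_apply, Matrix.sub_apply, Matrix.one_apply, hij, hAq, hA]
  -- step 1 : t = 1
  have ht1 : t = 1 := by
    by_contra hne
    set wv : Fin (n+1) → ℝ := fun i => B u (Pi.single i 1) with hwv
    have hwv0 : wv ≠ 0 := by
      intro h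
      apply hu0
      apply hBnondeg
      intro y
      rw [hBexp2]
      apply Finset.sum_eq_zero
      intro k _
      have hk : B u (Pi.single k 1) = 0 := by
        have := congrFun h k; simpa [hwv] using this
      rw [hBexpL u k] at hk
      rw [hk, zero_mul]
    have hBuA : ∀ x, B u (A.mulVec x) = (1/t) * B u x := by
      intro x
      have h1 : B (A.mulVec u) (A.mulVec x) = B u x := hgB u x
      rw [hgu, hBsl] at h1
      field_simp
      linarith
    have hAt : Aᵀ.mulVec wv = (1/t) • wv := by
      funext j
      have h1 : (Aᵀ.mulVec wv) j = ∑ i, A i j * wv i := by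
        rw [Matrix.mulVec, dotProduct]
        exact Finset.sum_congr rfl fun i _ => by rw [Matrix.transpose_apply]
      have h2 : A.mulVec (Pi.single j 1) = fun i => A i j := by
        rw [Matrix.mulVec_single]
        funext i
        simp
      have h3 : B u (A.mulVec (Pi.single j 1)) = ∑ i, A i j * wv i := by
        rw [h2]
        have hsing : ∀ (i : Fin (n+1)), (fun k => if i = k then (1:ℝ) else 0) = (Pi.single i 1 : Fin (n+1) → ℝ) := by
          intro i; funext k; rw [Pi.single_apply]; simp [eq_comm]
        have h := LinearMap.pi_apply_eq_sum_univ (Bbil u) (fun i => A i j)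
        simp only [hsing, hBbil_apply, smul_eq_mul] at h
        rw [h]
      have h4 := hBuA (Pi.single j 1)
      rw [h3] at h4
      rw [h1, h4, Pi.smul_apply, smul_eq_mul, hwv]
    have hdet0 : (A - (1/t) • 1).det = 0 := by
      have h5 : (Aᵀ - (1/t) • 1).det = 0 := by
        apply (Matrix.exists_mulVec_eq_zero_iff).mp
        refine ⟨wv, hwv0, ?_⟩
        rw [Matrix.sub_mulVec, hAt, Matrix.smul_mulVec, Matrix.one_mulVec, sub_self]
      have h6 : (A - (1/t) • 1)ᵀ = Aᵀ - (1/t) • 1 := by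
        rw [Matrix.transpose_sub, Matrix.transpose_smul, Matrix.transpose_one]
      rw [← Matrix.det_transpose, h6, h5]
    obtain ⟨v, hv0, hvker⟩ := (Matrix.exists_mulVec_eq_zero_iff).mpr hdet0
    have hAv : A.mulVec v = (1/t) • v := by
      rw [Matrix.sub_mulVec, Matrix.smul_mulVec, Matrix.one_mulVec, sub_eq_zero] at hvker
      exact hvker
    have hcpos : 0 < 1/t := by positivity
    have hviso : B v v = 0 := by
      have h7 : B (A.mulVec v) (A.mulVec v) = B v v := hgB v v
      rw [hAv, hBsl, hBsr] at h7
      have h8 : ((1/t) * (1/t) - 1) * B v v = 0 := by linarith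
      rcases mul_eq_zero.mp h8 with h9 | h9
      · exfalso
        have h10 : (1/t) * (1/t) = 1 := by linarith
        rcases mul_self_eq_one_iff.mp h10 with h11 | h11
        · apply hne
          field_simp at h11
          linarith
        · linarith
      · exact h9
    -- v or -v in closure C
    have hvsel : ∃ v1, v1 ∈ closure C ∧ v1 ≠ 0 ∧ A.mulVec v1 = (1/t) • v1 ∧ B v1 v1 = 0 := by
      rcases hiso v hviso hv0 with h | h
      · exact ⟨v, h, hv0, hAv, hviso⟩
      · refine ⟨-v, h, neg_ne_zero.mpr hv0, ?_, ?_⟩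
        · rw [Matrix.mulVec_neg, hAv, smul_neg]
        · rw [hBnegl, hBnegr, hviso]; ring
    obtain ⟨v1, hv1C, hv10, hv1A, hv1iso⟩ := hvsel
    have hv1n : 0 < ‖v1‖ := norm_pos_iff.mpr hv10
    set v2 := ‖v1‖⁻¹ • v1 with hv2
    have hv2C : v2 ∈ closure C := hcone _ (by positivity) _ hv1C
    have hv2n : ‖v2‖ = 1 := by
      rw [hv2, norm_smul, Real.norm_eq_abs, abs_of_pos (by positivity)]
      field_simp
    have hv2iso : B v2 v2 = 0 := by
      rw [hv2, hBsl, hBsr, hv1iso]; ring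
    have hv2A : A.mulVec v2 = (1/t) • v2 := by
      rw [hv2, Matrix.mulVec_smul, hv1A, smul_comm]
    obtain ⟨z, hzP, hzU⟩ := huniq
    have h8 : u = z := hzU u ⟨huC, hunorm, huiso, t, htpos, hgu⟩
    have h9 : v2 = z := hzU v2 ⟨hv2C, hv2n, hv2iso, 1/t, hcpos, hv2A⟩
    have h10 : A.mulVec u = (1/t) • u := by
      rw [h8, ← h9] at *
      exact hv2A
    rw [hgu] at h10
    have h11 : (t - 1/t) • u = 0 := by
      rw [sub_smul, h10, sub_self]
    rcases smul_eq_zero.mp h11 with h12 | h12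
    · have h13 : t = 1/t := by linarith [sub_eq_zero.mp (by linarith [h12] : t - 1/t = 0)]
      have h14 : t * t = 1 := by
        field_simp at h13
        linarith
      rcases mul_self_eq_one_iff.mp h14 with h15 | h15
      · exact hne h15
      · linarith
    · exact hu0 h12
  subst ht1
  rw [one_smul] at hgu
  -- step 2 : fixed vectors have nonpositive norm
  have hW : ∀ w, A.mulVec w = w → B w w ≤ 0 := by
    intro w hw
    by_contra hcon
    push_neg at hcon
    have hs : 0 < Real.sqrt (B w w) := Real.sqrt_pos.mpr hcon
    set x := (Real.sqrt (B w w))⁻¹ • w with hx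
    have hBxx : B x x = 1 := by
      rw [hx, hBsl, hBsr]
      rw [← Real.mul_self_sqrt (le_of_lt hcon)]
      field_simp
      rw [Real.sqrt_sq hs.le]
    have hAx : A.mulVec x = x := by
      rw [hx, Matrix.mulVec_smul, hw]
    rcases hpos x (by rw [hBxx]; norm_num) with hxC | hxC
    · exact hnofix x ⟨hxC, hBxx⟩ hAx
    · refine hnofix (-x) ⟨hxC, ?_⟩ ?_
      · rw [hBnegl, hBnegr, hBxx]; ring
      · rw [Matrix.mulVec_neg, hAx]
  -- step 3 : u is B-orthogonal to all fixed vectors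
  have horth : ∀ w, A.mulVec w = w → B u w = 0 := by
    intro w hw
    have hcc := hW w hw
    have hq : ∀ s : ℝ, 2*s*(B u w) + s^2 * (B w w) ≤ 0 := by
      intro s
      have h1 : A.mulVec (u + s • w) = u + s • w := by
        rw [Matrix.mulVec_add, Matrix.mulVec_smul, hgu, hw]
      have h2 := hW _ h1
      have h3 : B (u + s • w) (u + s • w)
          = B u u + s * B u w + s * B w u + s * (s * B w w) := by
        rw [hBal, hBar, hBar, hBsl, hBsr, hBsr, hBsl]
        ring
      rw [h3, huiso, hBsymm w u] at h2
      nlinarith [h2]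
    by_contra hb
    have hd : 0 < 1 + |B w w| := by positivity
    set e : ℝ := (1 + |B w w|)⁻¹ with he_def
    have hepos : 0 < e := by positivity
    have he : e * (1 + |B w w|) = 1 := inv_mul_cancel₀ (ne_of_gt hd)
    have he' : e + e * |B w w| = 1 := by rw [← he]; ring
    have hb2 : 0 < (B u w)^2 := by positivity
    have habs := neg_abs_le (B w w)
    have hq1 := hq ((B u w) * e)
    have h8 : (B u w)^2 * e * (2 + e * (B w w)) ≤ 0 := by nlinarith [hq1]
    have hec : -(e * |B w w|) ≤ e * (B w w) := by nlinarith [mul_le_mul_of_nonneg_left habs (le_of_lt hepos)]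
    have h9 : 0 < 2 + e * (B w w) := by nlinarith [hepos]
    nlinarith [mul_pos (mul_pos hb2 hepos) h9]
  -- rational spanning of the fixed space
  obtain ⟨d, p, hpker, hpspan⟩ := ker_rational (Aq - 1)
  have hfixp : ∀ j, A.mulVec (rcast (p j)) = rcast (p j) := by
    intro j
    have h1 : ((Aq - 1).map (Rat.cast : ℚ → ℝ)).mulVec (rcast (p j)) = rcast ((Aq - 1).mulVec (p j)) :=
      mulVec_rcast _ _
    rw [hpker j, hAq1cast] at h1
    have h2 : rcast (0 : Fin (n+1) → ℚ) = 0 := by funext i; simp [rcast]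
    rw [h2, Matrix.sub_mulVec, Matrix.one_mulVec, sub_eq_zero] at h1
    exact h1
  -- the combined rational matrix
  set R : Matrix (Fin d) (Fin (n+1)) ℚ := Matrix.of (fun j => Matrix.vecMul (p j) Gq) with hR
  set M2 : Matrix (Fin d ⊕ Fin (n+1)) (Fin (n+1)) ℚ :=
    Matrix.of (Sum.elim (fun j => R j) (fun i => (Aq - 1) i)) with hM2
  -- components of the real action of M2
  have hM2l : ∀ (x : Fin (n+1) → ℝ) (j : Fin d),
      (M2.map (Rat.cast : ℚ → ℝ)).mulVec x (Sum.inl j) = B (rcast (p j)) x := by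
    intro x j
    rw [hBw]
    rw [Matrix.mulVec, dotProduct]
    rfl
  have hM2r : ∀ (x : Fin (n+1) → ℝ) (i : Fin (n+1)),
      (M2.map (Rat.cast : ℚ → ℝ)).mulVec x (Sum.inr i) = ((A - 1).mulVec x) i := by
    intro x i
    rw [← hAq1cast]
    rfl
  -- u lies in the real kernel of M2
  have hukernel : (M2.map (Rat.cast : ℚ → ℝ)).mulVec u = 0 := by
    funext s
    rcases s with j | i
    · rw [hM2l]
      rw [hBsymm]
      exact horth _ (hfixp j)
    · rw [hM2r, Matrix.sub_mulVec, Matrix.one_mulVec, hgu, sub_self]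
      rfl
  -- the radical is spanned by u
  have hrad : ∀ x : Fin (n+1) → ℝ, (M2.map (Rat.cast : ℚ → ℝ)).mulVec x = 0 →
      ∃ r : ℝ, x = r • u := by
    intro x hx
    have hxfix : A.mulVec x = x := by
      have h1 : ∀ i, ((A - 1).mulVec x) i = 0 := by
        intro i; rw [← hM2r]; rw [hx]; rfl
      have h2 : (A - 1).mulVec x = 0 := funext h1
      rw [Matrix.sub_mulVec, Matrix.one_mulVec, sub_eq_zero] at h2
      exact h2
    have hxorth : ∀ j, B (rcast (p j)) x = 0 := by
      intro j; rw [← hM2l]; rw [hx]; rfl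
    -- B w x = 0 for every fixed w
    have hall : ∀ w, A.mulVec w = w → B w x = 0 := by
      intro w hw
      -- w is in the span of the rcast (p j)
      have hwspan : w ∈ Submodule.span ℝ (Set.range (fun j => rcast (p j))) := by
        apply hpspan
        rw [hAq1cast, Matrix.sub_mulVec, Matrix.one_mulVec, hw, sub_self]
      -- the functional B · x vanishes on the span
      have hker : Submodule.span ℝ (Set.range (fun j => rcast (p j)))
          ≤ LinearMap.ker (Bbil.flip x) := by
        rw [Submodule.span_le]
        rintro _ ⟨j, rfl⟩
        simp only [SetLike.mem_coe, LinearMap.mem_ker, LinearMap.flip_apply]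
        rw [hBbil_apply]
        exact hxorth j
      have := hker hwspan
      rw [LinearMap.mem_ker, LinearMap.flip_apply, hBbil_apply] at this
      exact this
    have hxiso : B x x = 0 := hall x hxfix
    have hux : B u x = 0 := hall u hgu
    -- parallel via mink_parallel
    have hTu0 : T u ≠ 0 := fun h => hu0 ((LinearEquiv.map_eq_zero_iff T).mp h)
    have h1 : mink n (T u) (T u) = 0 := by rw [← hT]; exact huiso
    have h2 : mink n (T x) (T x) = 0 := by rw [← hT]; exact hxiso
    have h3 : mink n (T u) (T x) = 0 := by rw [← hT]; exact hux
    obtain ⟨r, hr⟩ := mink_parallel h1 h2 h3 hTu0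
    refine ⟨r, ?_⟩
    have h4 : T x = T (r • u) := by rw [_root_.map_smul]; exact hr
    exact T.injective h4
  -- apply rational-kernel lemma to M2
  obtain ⟨d2, q2, hq2ker, hq2span⟩ := ker_rational M2
  have huspan : u ∈ Submodule.span ℝ (Set.range (fun j => rcast (q2 j))) :=
    hq2span u hukernel
  have hgen : ∀ j, ∃ r : ℝ, rcast (q2 j) = r • u := by
    intro j
    apply hrad
    rw [mulVec_rcast, hq2ker j]
    funext i; simp [rcast]
  have hex : ∃ j, rcast (q2 j) ≠ 0 := by
    by_contra hallz
    push_neg at hallz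
    have hsub : Set.range (fun j => rcast (q2 j)) ⊆ {0} := by
      rintro _ ⟨j, rfl⟩
      exact hallz j
    have : u ∈ Submodule.span ℝ ({0} : Set (Fin (n+1) → ℝ)) :=
      Submodule.span_mono hsub huspan
    rw [Submodule.span_zero_singleton] at this
    exact hu0 this
  obtain ⟨j, hj⟩ := hex
  obtain ⟨r, hr⟩ := hgen j
  have hr0 : r ≠ 0 := by
    intro h
    rw [h, zero_smul] at hr
    exact hj hr
  rcases lt_or_gt_of_ne hr0 with hrneg | hrpos
  · refine ⟨-(q2 j), (-r)⁻¹, inv_pos.mpr (by linarith), ?_⟩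
    have h1 : (fun i => ((-(q2 j)) i : ℝ)) = -(rcast (q2 j)) := by
      funext i; simp [rcast]
    rw [h1, hr, ← neg_smul, smul_smul, inv_mul_cancel₀ (by linarith : (-r) ≠ 0), one_smul]
  · refine ⟨q2 j, r⁻¹, by positivity, ?_⟩
    have h1 : (fun i => ((q2 j) i : ℝ)) = rcast (q2 j) := rfl
    rw [h1, hr, smul_smul, inv_mul_cancel₀ hr0, one_smul]
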